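/- Let R : X → Y → Z → Prop be a ternary relation, Q a quantale, and f : Y → Q, g : Z → Q, h : X → Q. Define (f \ h) : Z → Q by (f \ h) z = ⨅ {f y ⟍ h x | x, y, R x y z} and (h / g) : Y → Q by (h / g) y = ⨅ {h x ⫻ g z | x, z, R x y z}, where for u, w ∈ Q, u ⟍ w = ⨆ {v | u * v ≤ w} and w ⫻ u = ⨆ {v | v * u ≤ w} are the residuals in Q. Then f ∗_R g ≤ h ↔ g ≤ f \ h ↔ f ≤ h / g, with functions ordered pointwise. -/
import Mathlib


/-- Relational convolution: `(f ∗_R g) x = ⨆ {f y * g z | R x y z}`. -/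
def rconv {X Y Z Q : Type*} [CompleteLattice Q] [Mul Q]
    (R : X → Y → Z → Prop) (f : Y → Q) (g : Z → Q) : X → Q :=
  fun x => ⨆ (y) (z) (_ : R x y z), f y * g z

/-- Left residual in a quantale: `u ⟍ w = ⨆ {v | u * v ≤ w}`. -/
def lres {Q : Type*} [CompleteLattice Q] [Mul Q] (u w : Q) : Q :=
  sSup {v | u * v ≤ w}

/-- Right residual in a quantale: `w ⫻ u = ⨆ {v | v * u ≤ w}`. -/
def rres {Q : Type*} [CompleteLattice Q] [Mul Q] (w u : Q) : Q :=
  sSup {v | v * u ≤ w}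

/-- `(f \ h) z = ⨅ {f y ⟍ h x | R x y z}`. -/
def lresConv {X Y Z Q : Type*} [CompleteLattice Q] [Mul Q]
    (R : X → Y → Z → Prop) (f : Y → Q) (h : X → Q) : Z → Q :=
  fun z => ⨅ (x) (y) (_ : R x y z), lres (f y) (h x)

/-- `(h / g) y = ⨅ {h x ⫻ g z | R x y z}`. -/
def rresConv {X Y Z Q : Type*} [CompleteLattice Q] [Mul Q]
    (R : X → Y → Z → Prop) (h : X → Q) (g : Z → Q) : Y → Q :=
  fun y => ⨅ (x) (z) (_ : R x y z), rres (h x) (g z)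

theorem res_lifting {X Y Z Q : Type*} [CompleteLattice Q] [Mul Q]
    (mul_assoc : ∀ a b c : Q, a * b * c = a * (b * c))
    (hdistl : ∀ (A : Set Q) (b : Q), sSup A * b = ⨆ a ∈ A, a * b)
    (hdistr : ∀ (a : Q) (B : Set Q), a * sSup B = ⨆ b ∈ B, a * b)
    (R : X → Y → Z → Prop) (f : Y → Q) (g : Z → Q) (h : X → Q) :
    (rconv R f g ≤ h ↔ g ≤ lresConv R f h) ∧
    (rconv R f g ≤ h ↔ f ≤ rresConv R h g) := by
  have le_lres : ∀ a b c : Q, a * b ≤ c ↔ b ≤ lres a c := by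
    intro a b c
    constructor
    · intro hb; exact le_sSup hb
    · intro hb
      calc a * b ≤ a * lres a c := by
            have := hdistr a {b}
            -- use monotonicity of a * ·
            have hm : ∀ u v : Q, u ≤ v → a * u ≤ a * v := by
              intro u v huv
              have : a * sSup {u, v} = ⨆ x ∈ ({u, v} : Set Q), a * x := hdistr a _
              have h2 : sSup ({u, v} : Set Q) = v := by
                rw [sSup_pair, sup_eq_right.mpr huv]
              rw [h2] at this
              rw [this]
              exact le_biSup (fun x => a * x) (Set.mem_insert _ _)
            exact hm _ _ hb
        _ ≤ c := by
            rw [lres, hdistr]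
            exact iSup₂_le fun v hv => hv
  have le_rres : ∀ a b c : Q, b * a ≤ c ↔ b ≤ rres c a := by
    intro a b c
    constructor
    · intro hb; exact le_sSup hb
    · intro hb
      calc b * a ≤ rres c a * a := by
            have hm : ∀ u v : Q, u ≤ v → u * a ≤ v * a := by
              intro u v huv
              have : sSup ({u, v} : Set Q) * a = ⨆ x ∈ ({u, v} : Set Q), x * a := hdistl _ a
              have h2 : sSup ({u, v} : Set Q) = v := by
                rw [sSup_pair, sup_eq_right.mpr huv]
              rw [h2] at this
              rw [this]
              exact le_biSup (fun x => x * a) (Set.mem_insert _ _)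
            exact hm _ _ hb
        _ ≤ c := by
            rw [rres, hdistl]
            exact iSup₂_le fun v hv => hv
  have key : rconv R f g ≤ h ↔ ∀ x y z, R x y z → f y * g z ≤ h x := by
    constructor
    · intro hle x y z hr
      have h1 : f y * g z ≤ rconv R f g x := by
        simp only [rconv]
        exact le_iSup_of_le y (le_iSup_of_le z (le_iSup_of_le hr le_rfl))
      exact h1.trans (hle x)
    · intro hall x
      exact iSup_le fun y => iSup_le fun z => iSup_le fun hr => hall x y z hr
  constructor
  · rw [key]
    constructor
    · intro hall z
      exact le_iInf fun x => le_iInf fun y => le_iInf fun hr => (le_lres _ _ _).mp (hall x y z hr)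
    · intro hle x y z hr
      exact (le_lres _ _ _).mpr <| (hle z).trans <| (iInf_le _ x).trans <| (iInf_le _ y).trans (iInf_le _ hr)
  · rw [key]
    constructor
    · intro hall y
      exact le_iInf fun x => le_iInf fun z => le_iInf fun hr => (le_rres _ _ _).mp (hall x y z hr)
    · intro hle x y z hr
      exact (le_rres _ _ _).mpr <| (hle y).trans <| (iInf_le _ x).trans <| (iInf_le _ z).trans (iInf_le _ hr)
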